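/- Let E ⊂ ℝ^{n+1} be an n-dimensional ADR set with surface measure σ = H^n|_E, let μ be a Borel measure on E, fix x₀ ∈ E, 0 < r₀ < diam E, η ∈ (0,1), C₁ ≥ 1 and θ > 0. Suppose that for every z ∈ E such that B(z, η r₀) meets B(x₀, r₀), the weak-A∞ estimate holds at small scales: for every ball B = B(y,s) with y ∈ E and 2B ⊆ B(z, η r₀), one has μ(A) ≤ C₁ (σ(A)/σ(Δ))^θ μ(2Δ) for every Borel A ⊆ Δ := B ∩ E, where 2Δ := 2B ∩ E. Then there is C₂, depending only on n, the ADR constant, η, C₁ and θ, such that for every ball B = B(x,s) with x ∈ E and 2B ⊆ B(x₀, r₀), one has μ(A) ≤ C₂ (σ(A)/σ(Δ))^θ μ(2Δ) for every Borel A ⊆ Δ := B ∩ E; that is, μ ∈ weak-A∞(B(x₀,r₀) ∩ E). -/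

import Mathlib

open Metric MeasureTheory Set
open scoped NNReal ENNReal

noncomputable section

/-- `ℝ^{n+1}` -/
abbrev Euc (n : ℕ) : Type := EuclideanSpace ℝ (Fin (n + 1))

/-- The distance between two subsets of `ℝ^{n+1}`. -/
def sDist {n : ℕ} (A B : Set (Euc n)) : ℝ := sInf (Set.image2 dist A B)

/-- `E ⊆ ℝ^{n+1}` is an `n`-dimensional Ahlfors-David regular set with constant `C`. -/
def IsADR (n : ℕ) (E : Set (Euc n)) (C : ℝ) : Prop :=
  IsClosed E ∧ 1 ≤ C ∧ ∀ x ∈ E, ∀ r : ℝ, 0 < r → ENNReal.ofReal r < EMetric.diam E →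
    ENNReal.ofReal (C⁻¹ * r ^ n) ≤ μH[(n : ℝ)] (E ∩ ball x r) ∧
      μH[(n : ℝ)] (E ∩ ball x r) ≤ ENNReal.ofReal (C * r ^ n)

/-- In a ball-inclusion in Euclidean space, the distance between centers plus the small
radius is at most the big radius. -/
lemma dist_add_le_of_ball_subset {n : ℕ} {x y : Euc n} {a b : ℝ} (ha : 0 < a)
    (h : ball x a ⊆ ball y b) : dist x y + a ≤ b := by
  classical
  set u : Euc n := if x = y then EuclideanSpace.single 0 1 else ‖x - y‖⁻¹ • (x - y) with hu
  have hnu : ‖u‖ = 1 := by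
    rw [hu]
    split_ifs with hxy
    · simpa using EuclideanSpace.norm_single (𝕜 := ℝ) (0 : Fin (n + 1)) 1
    · have h0 : ‖x - y‖ ≠ 0 := by
        simpa [sub_eq_zero] using hxy
      rw [norm_smul, norm_inv, norm_norm, inv_mul_cancel₀ h0]
  have key : ∀ t : ℝ, 0 ≤ t → t < a → dist x y + t < b := by
    intro t ht hta
    have hmem : x + t • u ∈ ball x a := by
      rw [mem_ball, dist_eq_norm, add_sub_cancel_left, norm_smul, hnu, mul_one,
        Real.norm_eq_abs, abs_of_nonneg ht]
      exact hta
    have hb := h hmem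
    rw [mem_ball, dist_eq_norm] at hb
    have hxyt : ‖x + t • u - y‖ = ‖x - y‖ + t := by
      have hrw : x + t • u - y = (x - y) + t • u := by
        rw [add_sub_right_comm]
      rw [hrw]
      by_cases hxy : x = y
      · simp [hxy, hu, norm_smul, hnu, abs_of_nonneg ht]
      · have h0 : (0:ℝ) < ‖x - y‖ := by
          rw [norm_pos_iff, sub_ne_zero]; exact hxy
        have hrw2 : (x - y) + t • u = (1 + t * ‖x - y‖⁻¹) • (x - y) := by
          rw [hu, if_neg hxy, smul_smul, add_smul, one_smul]
        rw [hrw2, norm_smul, Real.norm_eq_abs, abs_of_nonneg (by positivity)]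
        field_simp
    rw [hxyt, ← dist_eq_norm] at hb
    exact hb
  have h0b : dist x y < b := by simpa using key 0 le_rfl ha
  by_contra hc
  push_neg at hc
  have h1 : 0 < b - dist x y := by linarith
  have := key (b - dist x y) h1.le (by linarith)
  linarith

/-- A totally bounded set admits, for every `δ > 0`, a finite `δ`-separated subset whose
`3δ/2`-balls cover the set. -/
lemma exists_separated_cover {n : ℕ} {S : Set (Euc n)} (hS : TotallyBounded S) {δ : ℝ}
    (hδ : 0 < δ) :
    ∃ T : Finset (Euc n), ↑T ⊆ S ∧ (∀ a ∈ T, ∀ b ∈ T, a ≠ b → δ ≤ dist a b) ∧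
      S ⊆ ⋃ t ∈ T, ball t (3 * δ / 2) := by
  classical
  obtain ⟨F, hFS, hFfin, hcov⟩ := EMetric.totallyBounded_iff'.1 hS (ENNReal.ofReal (δ / 2))
    (ENNReal.ofReal_pos.mpr (by linarith))
  simp only [Metric.emetric_ball] at hcov
  set Ffin : Finset (Euc n) := hFfin.toFinset with hFdef
  set 𝒮 : Finset (Finset (Euc n)) :=
    Ffin.powerset.filter (fun T => ∀ a ∈ T, ∀ b ∈ T, a ≠ b → δ ≤ dist a b) with h𝒮
  have hempty : (∅ : Finset (Euc n)) ∈ 𝒮 := by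
    simp [h𝒮]
  obtain ⟨T, hT𝒮, hTmax⟩ := 𝒮.exists_max_image Finset.card ⟨∅, hempty⟩
  rw [h𝒮, Finset.mem_filter, Finset.mem_powerset] at hT𝒮
  obtain ⟨hTF, hTsep⟩ := hT𝒮
  have hTsub : (↑T : Set (Euc n)) ⊆ S := by
    intro t ht
    exact hFS (by simpa [hFdef] using hTF ht)
  refine ⟨T, hTsub, hTsep, ?_⟩
  intro p hp
  obtain ⟨y, hyF, hpy⟩ := Set.mem_iUnion₂.1 (hcov hp)
  have hyFfin : y ∈ Ffin := by simpa [hFdef] using hyF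
  have hnear : ∃ t ∈ T, dist y t < δ := by
    by_contra hfar
    push_neg at hfar
    have hyT : y ∉ T := by
      intro hyT
      have := hfar y hyT
      simp at this
      linarith
    have hins : insert y T ∈ 𝒮 := by
      rw [h𝒮, Finset.mem_filter, Finset.mem_powerset]
      constructor
      · exact Finset.insert_subset hyFfin hTF
      · intro a ha b hb hab
        rcases Finset.mem_insert.1 ha with rfl | haT
        · rcases Finset.mem_insert.1 hb with rfl | hbT
          · exact absurd rfl hab
          · exact hfar b hbT
        · rcases Finset.mem_insert.1 hb with rfl | hbT
          · rw [dist_comm]; exact hfar a haT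
          · exact hTsep a haT b hbT hab
    have := hTmax _ hins
    rw [Finset.card_insert_of_notMem hyT] at this
    omega
  obtain ⟨t, htT, hyt⟩ := hnear
  have : dist p t < 3 * δ / 2 := by
    calc dist p t ≤ dist p y + dist y t := dist_triangle p y t
    _ < δ / 2 + δ := by
        have : dist p y < δ / 2 := hpy
        linarith
    _ = 3 * δ / 2 := by ring
  exact Set.mem_biUnion htT (mem_ball.mpr this)

set_option maxHeartbeats 1000000 in
/-- **Patching small-scale weak-`A_∞` to a full surface ball.** Let `E` be
`n`-dimensional ADR with surface measure `σ = Hⁿ|_E`, `μ` a Borel measure on `E`,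
`x₀ ∈ E`, `0 < r₀ < diam E`, `η ∈ (0,1)`, `C₁ ≥ 1`, `θ > 0`. If for every `z ∈ E`
with `B(z, η r₀)` meeting `B(x₀, r₀)` the weak-`A_∞` estimate with constants
`(C₁, θ)` holds for all surface balls `Δ = B ∩ E` with `2B ⊆ B(z, η r₀)`, then
there is `C₂ = C₂(n, ADR, η, C₁, θ)` such that the weak-`A_∞` estimate with
constants `(C₂, θ)` holds for all surface balls `Δ = B ∩ E` with `2B ⊆ B(x₀, r₀)`;
that is, `μ ∈ weak-A_∞(B(x₀, r₀) ∩ E)`. -/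
theorem weak_Ainfty_patching
    (n : ℕ) (hn : 1 ≤ n) (C₀ η C₁ θ : ℝ) (hC₀ : 1 ≤ C₀) (hη0 : 0 < η) (hη1 : η < 1)
    (hC₁ : 1 ≤ C₁) (hθ : 0 < θ) :
    ∃ C₂ : ℝ, 0 < C₂ ∧
      ∀ E : Set (Euc n), IsADR n E C₀ →
      ∀ (μ : Measure (Euc n)) (x₀ : Euc n) (r₀ : ℝ), x₀ ∈ E → 0 < r₀ →
        ENNReal.ofReal r₀ < EMetric.diam E →
        (∀ z ∈ E, (ball z (η * r₀) ∩ ball x₀ r₀).Nonempty →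
          ∀ y ∈ E, ∀ s : ℝ, ball y (2 * s) ⊆ ball z (η * r₀) →
            ∀ A : Set (Euc n), MeasurableSet A → A ⊆ ball y s ∩ E →
              μ A ≤ ENNReal.ofReal C₁ *
                (μH[(n : ℝ)] A / μH[(n : ℝ)] (ball y s ∩ E)) ^ θ *
                μ (ball y (2 * s) ∩ E)) →
        ∀ x ∈ E, ∀ s : ℝ, ball x (2 * s) ⊆ ball x₀ r₀ →
          ∀ A : Set (Euc n), MeasurableSet A → A ⊆ ball x s ∩ E →
            μ A ≤ ENNReal.ofReal C₂ *
              (μH[(n : ℝ)] A / μH[(n : ℝ)] (ball x s ∩ E)) ^ θ *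
              μ (ball x (2 * s) ∩ E) := by
  classical
  set K : ℝ := C₀ ^ 2 * (2 / η) ^ n with hKdef
  set N : ℝ := C₀ ^ 2 * (12 / η) ^ n with hNdef
  have hC₀0 : (0:ℝ) < C₀ := by linarith
  have hK0 : 0 < K := by positivity
  have hN0 : 0 < N := by positivity
  refine ⟨N * C₁ * K ^ θ, by positivity, ?_⟩
  intro E hE μ x₀ r₀ hx₀E hr₀ hdiam hsmall x hxE s h2B A hAmeas hAsub
  obtain ⟨hEclosed, -, hADR⟩ := hE
  by_cases hs : s ≤ 0
  · have hA : A = ∅ := by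
      have hball : ball x s = ∅ := ball_eq_empty.mpr hs
      rw [hball, Set.empty_inter, Set.subset_empty_iff] at hAsub
      exact hAsub
    simp [hA]
  push_neg at hs
  have hAE : A ⊆ E := fun p hp => (hAsub hp).2
  have hxx₀ : dist x x₀ + 2 * s ≤ r₀ := dist_add_le_of_ball_subset (by linarith) h2B
  have hdistx : dist x x₀ ≤ r₀ - 2 * s := by linarith
  have h2sr₀ : 2 * s ≤ r₀ := by
    have := dist_nonneg (x := x) (y := x₀); linarith
  have hsr₀ : s < r₀ := by linarith
  set δ : ℝ := η * s / 3 with hδdef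
  have hδ : 0 < δ := by positivity
  -- ADR at various radii
  have hdiam_of : ∀ r : ℝ, r ≤ r₀ → ENNReal.ofReal r < EMetric.diam E :=
    fun r hr => lt_of_le_of_lt (ENNReal.ofReal_le_ofReal hr) hdiam
  have hηs_le : η * s ≤ s := by nlinarith
  -- the surface ball Δ
  have hΔlow := (hADR x hxE s hs (hdiam_of s (by linarith))).1
  have hΔup := (hADR x hxE s hs (hdiam_of s (by linarith))).2
  rw [Set.inter_comm] at hΔlow hΔup
  have hσΔ0 : μH[(n : ℝ)] (ball x s ∩ E) ≠ 0 := by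
    have hpos : (0:ℝ≥0∞) < ENNReal.ofReal (C₀⁻¹ * s ^ n) :=
      ENNReal.ofReal_pos.mpr (by positivity)
    exact (hpos.trans_le hΔlow).ne'
  have hσΔtop : μH[(n : ℝ)] (ball x s ∩ E) ≠ ∞ :=
    (lt_of_le_of_lt hΔup ENNReal.ofReal_lt_top).ne
  -- separated cover of Δ
  have hStb : TotallyBounded (ball x s ∩ E) :=
    TotallyBounded.subset (Set.inter_subset_left.trans ball_subset_closedBall)
      (isCompact_closedBall x s).totallyBounded
  obtain ⟨T, hTsub, hTsep, hTcov⟩ := exists_separated_cover hStb hδ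
  have htE : ∀ t ∈ T, t ∈ E := fun t ht => (hTsub ht).2
  have htx : ∀ t ∈ T, dist t x < s := fun t ht => mem_ball.1 (hTsub ht).1
  have htx₀ : ∀ t ∈ T, t ∈ ball x₀ r₀ := by
    intro t ht
    rw [mem_ball]
    calc dist t x₀ ≤ dist t x + dist x x₀ := dist_triangle t x x₀
    _ < s + (r₀ - 2 * s) := by
        have := htx t ht; linarith
    _ ≤ r₀ := by linarith
  -- cardinality bound : |T| ≤ N
  have hδ2pos : (0:ℝ) < δ / 2 := by linarith
  have hdisj : (↑T : Set (Euc n)).PairwiseDisjoint (fun t => ball t (δ / 2) ∩ E) := by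
    intro a ha b hb hab
    rw [Function.onFun]
    rw [Set.disjoint_left]
    intro p hpa hpb
    have h1 : dist p a < δ / 2 := mem_ball.1 hpa.1
    have h2 : dist p b < δ / 2 := mem_ball.1 hpb.1
    have : dist a b < δ := by
      calc dist a b ≤ dist a p + dist p b := dist_triangle a p b
      _ < δ / 2 + δ / 2 := by rw [dist_comm a p]; exact add_lt_add h1 h2
      _ = δ := by ring
    exact absurd (hTsep a ha b hb hab) (not_le.mpr this)
  have hmeasb : ∀ t ∈ T, MeasurableSet (ball t (δ / 2) ∩ E) :=
    fun t _ => measurableSet_ball.inter hEclosed.measurableSet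
  have hsum_eq : ∑ t ∈ T, μH[(n : ℝ)] (ball t (δ / 2) ∩ E)
      = μH[(n : ℝ)] (⋃ t ∈ T, ball t (δ / 2) ∩ E) :=
    (measure_biUnion_finset hdisj hmeasb).symm
  have hunion_sub : (⋃ t ∈ T, ball t (δ / 2) ∩ E) ⊆ ball x (2 * s) ∩ E := by
    intro p hp
    obtain ⟨t, htT, hpt⟩ := Set.mem_iUnion₂.1 hp
    refine ⟨mem_ball.mpr ?_, hpt.2⟩
    calc dist p x ≤ dist p t + dist t x := dist_triangle p t x
    _ < δ / 2 + s := add_lt_add (mem_ball.1 hpt.1) (htx t htT)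
    _ ≤ 2 * s := by rw [hδdef]; nlinarith
  have h2sup := (hADR x hxE (2 * s) (by linarith) (hdiam_of (2 * s) h2sr₀)).2
  rw [Set.inter_comm] at h2sup
  have hsum_le : ∑ t ∈ T, μH[(n : ℝ)] (ball t (δ / 2) ∩ E)
      ≤ ENNReal.ofReal (C₀ * (2 * s) ^ n) := by
    rw [hsum_eq]
    exact le_trans (measure_mono hunion_sub) h2sup
  set m : ℝ≥0∞ := ENNReal.ofReal (C₀⁻¹ * (δ / 2) ^ n) with hmdef
  have hm0 : m ≠ 0 := by
    rw [hmdef]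
    simp only [ne_eq, ENNReal.ofReal_eq_zero, not_le]
    positivity
  have hmtop : m ≠ ∞ := ENNReal.ofReal_ne_top
  have hcard_m : (T.card : ℝ≥0∞) * m ≤ ENNReal.ofReal (C₀ * (2 * s) ^ n) := by
    refine le_trans ?_ hsum_le
    rw [← nsmul_eq_mul]
    refine Finset.card_nsmul_le_sum T _ m ?_
    intro t ht
    have := (hADR t (htE t ht) (δ / 2) hδ2pos (hdiam_of (δ / 2) (by linarith))).1
    rw [Set.inter_comm] at this
    exact this
  have hcard : (T.card : ℝ≥0∞) ≤ ENNReal.ofReal N := by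
    have h1 : (T.card : ℝ≥0∞) ≤ ENNReal.ofReal (C₀ * (2 * s) ^ n) / m :=
      (ENNReal.le_div_iff_mul_le (Or.inl hm0) (Or.inl hmtop)).mpr hcard_m
    refine h1.trans ?_
    rw [hmdef, ← ENNReal.ofReal_div_of_pos (by positivity)]
    refine ENNReal.ofReal_le_ofReal (le_of_eq ?_)
    have h2s : 2 * s = (12 / η) * (δ / 2) := by rw [hδdef]; field_simp; ring
    have hden : C₀⁻¹ * (δ / 2) ^ n ≠ 0 := by positivity
    rw [hNdef, h2s, mul_pow, div_eq_iff hden]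
    have hCC : C₀ ^ 2 * C₀⁻¹ = C₀ := by
      rw [pow_two, mul_assoc, mul_inv_cancel₀ (ne_of_gt hC₀0), mul_one]
    calc C₀ * ((12 / η) ^ n * (δ / 2) ^ n)
        = C₀ ^ 2 * C₀⁻¹ * ((12 / η) ^ n * (δ / 2) ^ n) := by rw [hCC]
      _ = C₀ ^ 2 * (12 / η) ^ n * (C₀⁻¹ * (δ / 2) ^ n) := by ring
  -- the per-ball estimate
  set ρ : ℝ := 3 * δ / 2 with hρdef
  have hρval : ρ = η * s / 2 := by rw [hρdef, hδdef]; ring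
  have hρpos : 0 < ρ := by rw [hρval]; positivity
  set c : ℝ≥0∞ := ENNReal.ofReal C₁ * (ENNReal.ofReal (K ^ θ) *
      (μH[(n : ℝ)] A / μH[(n : ℝ)] (ball x s ∩ E)) ^ θ) * μ (ball x (2 * s) ∩ E) with hcdef
  have hterm : ∀ t ∈ T, μ (A ∩ ball t ρ) ≤ c := by
    intro t ht
    have hne : (ball t (η * r₀) ∩ ball x₀ r₀).Nonempty :=
      ⟨t, mem_ball_self (by positivity), htx₀ t ht⟩
    have hsubη : ball t (2 * ρ) ⊆ ball t (η * r₀) := by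
      refine ball_subset_ball ?_
      rw [hρval]
      nlinarith
    have hA'sub : A ∩ ball t ρ ⊆ ball t ρ ∩ E :=
      fun p hp => ⟨hp.2, hAE hp.1⟩
    have hest := hsmall t (htE t ht) hne t (htE t ht) ρ hsubη (A ∩ ball t ρ)
      (hAmeas.inter measurableSet_ball) hA'sub
    refine hest.trans ?_
    -- bound each factor
    have hμmono : μ (ball t (2 * ρ) ∩ E) ≤ μ (ball x (2 * s) ∩ E) := by
      refine measure_mono (Set.inter_subset_inter_left E ?_)
      refine ball_subset_ball' ?_
      have h1 := htx t ht
      rw [hρval]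
      nlinarith
    have hσsub : μH[(n : ℝ)] (A ∩ ball t ρ) ≤ μH[(n : ℝ)] A :=
      measure_mono Set.inter_subset_left
    have hΔtlow := (hADR t (htE t ht) ρ hρpos (hdiam_of ρ (by rw [hρval]; nlinarith))).1
    rw [Set.inter_comm] at hΔtlow
    set m₂ : ℝ≥0∞ := ENNReal.ofReal (C₀⁻¹ * ρ ^ n) with hm₂def
    have hratio : μH[(n : ℝ)] (A ∩ ball t ρ) / μH[(n : ℝ)] (ball t ρ ∩ E)
        ≤ ENNReal.ofReal K * (μH[(n : ℝ)] A / μH[(n : ℝ)] (ball x s ∩ E)) := by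
      have h1 : μH[(n : ℝ)] (A ∩ ball t ρ) / μH[(n : ℝ)] (ball t ρ ∩ E)
          ≤ μH[(n : ℝ)] A / m₂ := ENNReal.div_le_div hσsub hΔtlow
      refine h1.trans ?_
      have hsplit : μH[(n : ℝ)] A / m₂
          = (μH[(n : ℝ)] A / μH[(n : ℝ)] (ball x s ∩ E))
            * (μH[(n : ℝ)] (ball x s ∩ E) / m₂) := by
        rw [div_eq_mul_inv, div_eq_mul_inv, div_eq_mul_inv, mul_assoc,
          ← mul_assoc (μH[(n : ℝ)] (ball x s ∩ E))⁻¹,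
          ENNReal.inv_mul_cancel hσΔ0 hσΔtop, one_mul]
      rw [hsplit]
      rw [mul_comm (ENNReal.ofReal K)]
      refine mul_le_mul_right ?_ _
      refine le_trans (ENNReal.div_le_div hΔup le_rfl) ?_
      rw [hm₂def, ← ENNReal.ofReal_div_of_pos (by positivity)]
      refine ENNReal.ofReal_le_ofReal (le_of_eq ?_)
      have hseq : s = (2 / η) * ρ := by rw [hρval]; field_simp
      have hden : C₀⁻¹ * ρ ^ n ≠ 0 := by positivity
      rw [hKdef, hseq, mul_pow, div_eq_iff hden]
      have hCC : C₀ ^ 2 * C₀⁻¹ = C₀ := by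
        rw [pow_two, mul_assoc, mul_inv_cancel₀ (ne_of_gt hC₀0), mul_one]
      calc C₀ * ((2 / η) ^ n * ρ ^ n)
          = C₀ ^ 2 * C₀⁻¹ * ((2 / η) ^ n * ρ ^ n) := by rw [hCC]
        _ = C₀ ^ 2 * (2 / η) ^ n * (C₀⁻¹ * ρ ^ n) := by ring
    have hratioθ : (μH[(n : ℝ)] (A ∩ ball t ρ) / μH[(n : ℝ)] (ball t ρ ∩ E)) ^ θ
        ≤ ENNReal.ofReal (K ^ θ) *
          (μH[(n : ℝ)] A / μH[(n : ℝ)] (ball x s ∩ E)) ^ θ := by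
      refine le_trans (ENNReal.rpow_le_rpow hratio hθ.le) ?_
      rw [ENNReal.mul_rpow_of_nonneg _ _ hθ.le, ENNReal.ofReal_rpow_of_pos hK0]
    rw [hcdef]
    exact mul_le_mul (mul_le_mul_right hratioθ _) hμmono zero_le zero_le
  -- sum up
  have hAcov : A ⊆ ⋃ t ∈ T, A ∩ ball t ρ := by
    intro p hp
    obtain ⟨t, htT, hpt⟩ := Set.mem_iUnion₂.1 (hTcov (hAsub hp))
    exact Set.mem_biUnion htT ⟨hp, hpt⟩
  calc μ A ≤ μ (⋃ t ∈ T, A ∩ ball t ρ) := measure_mono hAcov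
  _ ≤ ∑ t ∈ T, μ (A ∩ ball t ρ) := measure_biUnion_finset_le T _
  _ ≤ ∑ _t ∈ T, c := Finset.sum_le_sum hterm
  _ = (T.card : ℝ≥0∞) * c := by rw [Finset.sum_const, nsmul_eq_mul]
  _ ≤ ENNReal.ofReal N * c := mul_le_mul_left hcard c
  _ = ENNReal.ofReal (N * C₁ * K ^ θ) *
        (μH[(n : ℝ)] A / μH[(n : ℝ)] (ball x s ∩ E)) ^ θ * μ (ball x (2 * s) ∩ E) := by
      rw [hcdef, ENNReal.ofReal_mul (p := N * C₁) (by positivity),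
        ENNReal.ofReal_mul (p := N) (by positivity)]
      ring
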